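/- Let 0 ≤ a_1 < a_2 < … < a_r < M and 0 ≤ e_1 < e_2 < … < e_r < M be integers with N − e_i + a_j ≡ 0 (mod 2) for all 1 ≤ i,j ≤ r. Then the generating function with signed weights of all r-tuples of nonintersecting lattice paths of length N in the M-cylinder starting at the points a_1,…,a_r and ending in some permutation of the points e_1,…,e_r equals the determinant det( q(M,N,a_i,e_j;x) )_{i,j=1}^{r}. -/

import Mathlib

open Finset

attribute [local instance] Classical.propDecidable

/-- The value of a step: `true` encodes a `+1` step, `false` a `-1` step. -/
def stepVal (b : Bool) : ℤ := if b then 1 else -1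

/-- The position (in `ℤ`) after `k` steps of the path starting at `a ∈ ℤ`
with step sequence `s`. -/
def pos {N : ℕ} (a : ℤ) (s : Fin N → Bool) (k : ℕ) : ℤ :=
  a + ∑ i : Fin N, if (i : ℕ) < k then stepVal (s i) else 0

/-- The number of minus-steps of the step sequence `s`. -/
def dcount {N : ℕ} (s : Fin N → Bool) : ℕ :=
  (Finset.univ.filter fun i => s i = false).card

/-- The path with step sequence `s`, starting at `a`, ends at `e` in the `M`-cylinder. -/
def EndsAt (M : ℕ) {N : ℕ} (a : ℤ) (s : Fin N → Bool) (e : ℤ) : Prop :=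
  ((pos a s N : ℤ) : ZMod M) = (e : ZMod M)

/-- The offset of the path with step sequence `s`, starting at `a` and ending at `e`,
in the `M`-cylinder. -/
def offset (M : ℕ) {N : ℕ} (a : ℤ) (s : Fin N → Bool) (e : ℤ) : ℤ :=
  (a + (N : ℤ) - 2 * (dcount s : ℤ) - e) / (M : ℤ)

/-- The `r`-tuple of paths with step sequences `s i`, starting at the points `a i`,
is nonintersecting in the `M`-cylinder. -/
def NonIntersecting (M : ℕ) {N r : ℕ} (a : Fin r → ℤ) (s : Fin r → Fin N → Bool) : Prop :=
  ∀ k ≤ N, ∀ i j : Fin r, i ≠ j →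
    ((pos (a i) (s i) k : ℤ) : ZMod M) ≠ ((pos (a j) (s j) k : ℤ) : ZMod M)

/-- The generating function `q(M,N,a,e;x)`. -/
noncomputable def qx (M N : ℕ) (a e : ℤ) (x : ℂ) : ℂ :=
  ∑ d ∈ Finset.range (N + 1),
    if (M : ℤ) ∣ (a + (N : ℤ) - 2 * (d : ℤ) - e) then (N.choose d : ℂ) * x ^ d else 0

/-- The generating function `q(M,N,a,e;x,y)`. -/
noncomputable def qxy (M N : ℕ) (a e : ℤ) (x y : ℂ) : ℂ :=
  ∑ d ∈ Finset.range (N + 1),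
    if (M : ℤ) ∣ (a + (N : ℤ) - 2 * (d : ℤ) - e) then
      (N.choose d : ℂ) * x ^ d * y ^ ((a + (N : ℤ) - 2 * (d : ℤ) - e) / (M : ℤ))
    else 0
open Finset in
lemma pos_eq_linear {N : ℕ} (a : ℤ) (s : Fin N → Bool) :
    pos a s N = a + (N : ℤ) - 2 * (dcount s : ℤ) := by
  have h1 : ∀ i : Fin N, (if (i : ℕ) < N then stepVal (s i) else 0) = stepVal (s i) :=
    fun i => if_pos i.isLt
  have h2 : ∀ i : Fin N, stepVal (s i) = 1 - 2 * (if s i = false then (1:ℤ) else 0) := by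
    intro i; cases h : s i <;> simp [stepVal, h]
  unfold pos
  rw [Finset.sum_congr rfl (fun i _ => (h1 i).trans (h2 i))]
  rw [Finset.sum_sub_distrib, Finset.sum_const, ← Finset.mul_sum, Finset.sum_boole]
  unfold dcount
  simp [Finset.card_univ]
  ring
open Finset in
lemma endsAt_iff {M N : ℕ} (a e : ℤ) (s : Fin N → Bool) :
    EndsAt M a s e ↔ (M : ℤ) ∣ (a + (N : ℤ) - 2 * (dcount s : ℤ) - e) := by
  unfold EndsAt
  rw [pos_eq_linear, ZMod.intCast_eq_intCast_iff, Int.modEq_iff_dvd]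
  constructor <;> intro h <;> [skip; skip] <;>
    · have := dvd_neg.mpr h
      simpa [neg_sub] using this
open Finset in
lemma card_dcount_eq (N d : ℕ) :
    ((univ : Finset (Fin N → Bool)).filter fun s => dcount s = d).card = N.choose d := by
  have key : ((univ : Finset (Fin N → Bool)).filter fun s => dcount s = d).card
      = (Finset.powersetCard d (univ : Finset (Fin N))).card := by
    apply Finset.card_bij (fun s _ => (univ.filter fun i => s i = false))
    · intro s hs
      rw [Finset.mem_powersetCard]
      exact ⟨Finset.subset_univ _, (Finset.mem_filter.mp hs).2⟩
    · intro s hs t ht hst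
      funext i
      have := Finset.ext_iff.mp hst i
      simp only [Finset.mem_filter, Finset.mem_univ, true_and] at this
      cases h : s i <;> cases h' : t i
      · rfl
      · exact absurd (this.mp h) (by simp [h'])
      · exact absurd (this.mpr h') (by simp [h])
      · rfl
    · intro t ht
      rw [Finset.mem_powersetCard] at ht
      refine ⟨fun i => if i ∈ t then false else true, ?_, ?_⟩
      · simp only [Finset.mem_filter, Finset.mem_univ, true_and, dcount]
        have : (univ.filter fun i => (if i ∈ t then false else true) = false) = t := by
          ext i; by_cases h : i ∈ t <;> simp [h]
        exact Finset.mem_filter.mpr ⟨Finset.mem_univ _, by beta_reduce; rw [this]; exact ht.2⟩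
      · ext i; by_cases h : i ∈ t <;> simp [h]
  rw [key, Finset.card_powersetCard, Finset.card_fin]
open Finset in
lemma qx_eq_sum (M N : ℕ) (a e : ℤ) (x : ℂ) :
    qx M N a e x = ∑ s : Fin N → Bool, if EndsAt M a s e then x ^ dcount s else 0 := by
  classical
  have hmap : ∀ s : Fin N → Bool, s ∈ (univ : Finset (Fin N → Bool)) → dcount s ∈ Finset.range (N+1) := by
    intro s _
    rw [Finset.mem_range, Nat.lt_succ_iff]
    calc dcount s ≤ (univ : Finset (Fin N)).card := Finset.card_filter_le _ _
      _ = N := Finset.card_fin N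
  rw [← Finset.sum_fiberwise_of_maps_to hmap
    (fun s => if EndsAt M a s e then x ^ dcount s else 0)]
  unfold qx
  apply Finset.sum_congr rfl
  intro d _
  have hcongr : ∀ s ∈ (univ : Finset (Fin N → Bool)).filter fun s => dcount s = d,
      (if EndsAt M a s e then x ^ dcount s else 0)
        = (if (M : ℤ) ∣ (a + (N : ℤ) - 2 * (d : ℤ) - e) then x ^ d else 0) := by
    intro s hs
    have hd : dcount s = d := (Finset.mem_filter.mp hs).2
    rw [endsAt_iff, hd]; congr 1
  rw [Finset.sum_congr rfl hcongr, Finset.sum_const, card_dcount_eq, nsmul_eq_mul]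
  by_cases h : (M : ℤ) ∣ (a + (N : ℤ) - 2 * (d : ℤ) - e) <;> simp [h]
open Finset in
lemma pos_congr_prefix {N : ℕ} (b : ℤ) (u v : Fin N → Bool) (k m : ℕ) (hm : m ≤ k)
    (huv : ∀ i : Fin N, (i : ℕ) < k → u i = v i) : pos b u m = pos b v m := by
  unfold pos
  congr 1
  apply Finset.sum_congr rfl
  intro i _
  by_cases h : (i : ℕ) < m
  · rw [if_pos h, if_pos h, huv i (lt_of_lt_of_le h hm)]
  · rw [if_neg h, if_neg h]

open Finset in
lemma pos_splice {N : ℕ} (b c : ℤ) (u v : Fin N → Bool) (k : ℕ) :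
    pos b (fun m => if (m : ℕ) < k then u m else v m) N
      = pos b u k + (pos c v N - pos c v k) := by
  unfold pos
  have h1 : ∀ m : Fin N,
      (if (m : ℕ) < N then stepVal (if (m : ℕ) < k then u m else v m) else 0)
        = (if (m : ℕ) < k then stepVal (u m) else 0)
          + ((if (m : ℕ) < N then stepVal (v m) else 0) - (if (m : ℕ) < k then stepVal (v m) else 0)) := by
    intro m
    have hN := m.isLt
    by_cases h : (m : ℕ) < k <;> simp [h, hN]
  rw [Finset.sum_congr rfl (fun m _ => h1 m), Finset.sum_add_distrib, Finset.sum_sub_distrib]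
  ring

/-- Swap the tails (steps with index `≥ k`) of the `i`-th and `j`-th paths. -/
def tailSwap {N r : ℕ} (k : ℕ) (i j : Fin r) (s : Fin r → Fin N → Bool) :
    Fin r → Fin N → Bool :=
  fun l m => if (m : ℕ) < k then s l m else s (Equiv.swap i j l) m

lemma tailSwap_tailSwap {N r : ℕ} (k : ℕ) (i j : Fin r) (s : Fin r → Fin N → Bool) :
    tailSwap k i j (tailSwap k i j s) = s := by
  funext l m
  unfold tailSwap
  by_cases h : (m : ℕ) < k <;> simp [h, Equiv.swap_apply_self]

open Finset in
lemma sum_dcount_tailSwap {N r : ℕ} (k : ℕ) (i j : Fin r) (s : Fin r → Fin N → Bool) :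
    ∑ l, dcount (tailSwap k i j s l) = ∑ l, dcount (s l) := by
  simp only [dcount, Finset.card_filter]
  rw [Finset.sum_comm, Finset.sum_comm (f := fun l m => if s l m = false then 1 else 0)]
  apply Finset.sum_congr rfl
  intro m _
  by_cases h : (m : ℕ) < k
  · simp [tailSwap, h]
  · simp only [tailSwap, h, if_false]
    exact Equiv.sum_comp (Equiv.swap i j) (fun l => if s l m = false then 1 else 0)
/-- Some two of the paths meet (in the `M`-cylinder) at time `k`. -/
def MeetAt (M : ℕ) {N r : ℕ} (a : Fin r → ℤ) (s : Fin r → Fin N → Bool) (k : ℕ) : Prop :=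
  ∃ i j : Fin r, i ≠ j ∧
    ((pos (a i) (s i) k : ℤ) : ZMod M) = ((pos (a j) (s j) k : ℤ) : ZMod M)

/-- The first time at which two paths meet. -/
noncomputable def kk (M : ℕ) {N r : ℕ} (a : Fin r → ℤ) (s : Fin r → Fin N → Bool) : ℕ :=
  sInf {k | k ≤ N ∧ MeetAt M a s k}

open Finset in
/-- The set of indices involved in a meeting at the first meeting time. -/
noncomputable def iSet (M : ℕ) {N r : ℕ} (a : Fin r → ℤ) (s : Fin r → Fin N → Bool) :
    Finset (Fin r) :=
  univ.filter fun i => ∃ j, i ≠ j ∧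
    ((pos (a i) (s i) (kk M a s) : ℤ) : ZMod M) = ((pos (a j) (s j) (kk M a s) : ℤ) : ZMod M)

open Finset in
/-- The set of partners of `i` at the first meeting time. -/
noncomputable def jSet (M : ℕ) {N r : ℕ} (a : Fin r → ℤ) (s : Fin r → Fin N → Bool)
    (i : Fin r) : Finset (Fin r) :=
  univ.filter fun j => i ≠ j ∧
    ((pos (a i) (s i) (kk M a s) : ℤ) : ZMod M) = ((pos (a j) (s j) (kk M a s) : ℤ) : ZMod M)

lemma not_nonIntersecting_iff {M N r : ℕ} (a : Fin r → ℤ) (s : Fin r → Fin N → Bool) :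
    ¬ NonIntersecting M a s ↔ ∃ k, k ≤ N ∧ MeetAt M a s k := by
  unfold NonIntersecting MeetAt
  push_neg
  constructor
  · rintro ⟨k, hk, i, j, hij, h⟩; exact ⟨k, hk, i, j, hij, h⟩
  · rintro ⟨k, hk, i, j, hij, h⟩; exact ⟨k, hk, i, j, hij, h⟩

lemma kk_spec {M N r : ℕ} {a : Fin r → ℤ} {s : Fin r → Fin N → Bool}
    (h : ¬ NonIntersecting M a s) : kk M a s ≤ N ∧ MeetAt M a s (kk M a s) :=
  Nat.sInf_mem (not_nonIntersecting_iff a s |>.mp h)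

lemma iSet_nonempty {M N r : ℕ} {a : Fin r → ℤ} {s : Fin r → Fin N → Bool}
    (h : ¬ NonIntersecting M a s) : (iSet M a s).Nonempty := by
  obtain ⟨i, j, hij, hpos⟩ := (kk_spec h).2
  exact ⟨i, Finset.mem_filter.mpr ⟨Finset.mem_univ _, j, hij, hpos⟩⟩

/-- The smallest index involved in a meeting at the first meeting time. -/
noncomputable def ii (M : ℕ) {N r : ℕ} (a : Fin r → ℤ) (s : Fin r → Fin N → Bool)
    (h : ¬ NonIntersecting M a s) : Fin r :=
  (iSet M a s).min' (iSet_nonempty h)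

lemma jSet_nonempty {M N r : ℕ} {a : Fin r → ℤ} {s : Fin r → Fin N → Bool}
    (h : ¬ NonIntersecting M a s) : (jSet M a s (ii M a s h)).Nonempty := by
  have hmem := (iSet M a s).min'_mem (iSet_nonempty h)
  simp only [iSet, Finset.mem_filter] at hmem
  obtain ⟨-, j, hij, hpos⟩ := hmem
  exact ⟨j, Finset.mem_filter.mpr ⟨Finset.mem_univ _, hij, hpos⟩⟩

/-- The smallest partner of `ii` at the first meeting time. -/
noncomputable def jj (M : ℕ) {N r : ℕ} (a : Fin r → ℤ) (s : Fin r → Fin N → Bool)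
    (h : ¬ NonIntersecting M a s) : Fin r :=
  (jSet M a s (ii M a s h)).min' (jSet_nonempty h)

lemma jj_spec {M N r : ℕ} {a : Fin r → ℤ} {s : Fin r → Fin N → Bool}
    (h : ¬ NonIntersecting M a s) :
    ii M a s h ≠ jj M a s h ∧
      ((pos (a (ii M a s h)) (s (ii M a s h)) (kk M a s) : ℤ) : ZMod M)
        = ((pos (a (jj M a s h)) (s (jj M a s h)) (kk M a s) : ℤ) : ZMod M) := by
  have hmem := (jSet M a s (ii M a s h)).min'_mem (jSet_nonempty h)
  simp only [jSet, Finset.mem_filter] at hmem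
  exact hmem.2
section Invariance

variable {M N r : ℕ} {a : Fin r → ℤ} {s : Fin r → Fin N → Bool}

lemma pos_tailSwap_prefix (k : ℕ) (i j : Fin r) (b : ℤ) (l : Fin r) (m : ℕ) (hm : m ≤ k) :
    pos b (tailSwap k i j s l) m = pos b (s l) m := by
  apply pos_congr_prefix b _ _ k m hm
  intro i' hi'
  simp [tailSwap, hi']

lemma meetAt_congr {t : Fin r → Fin N → Bool} (m : ℕ)
    (hp : ∀ l, pos (a l) (t l) m = pos (a l) (s l) m) :
    MeetAt M a t m ↔ MeetAt M a s m := by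
  unfold MeetAt
  constructor
  · rintro ⟨i, j, hij, h⟩; exact ⟨i, j, hij, by rw [← hp i, ← hp j]; exact h⟩
  · rintro ⟨i, j, hij, h⟩; exact ⟨i, j, hij, by rw [hp i, hp j]; exact h⟩

variable (h : ¬ NonIntersecting M a s)

lemma not_nonIntersecting_tailSwap :
    ¬ NonIntersecting M a (tailSwap (kk M a s) (ii M a s h) (jj M a s h) s) := by
  rw [not_nonIntersecting_iff]
  refine ⟨kk M a s, (kk_spec h).1, ?_⟩
  rw [meetAt_congr (kk M a s) (fun l => pos_tailSwap_prefix _ _ _ _ _ _ le_rfl)]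
  exact (kk_spec h).2

lemma kk_tailSwap :
    kk M a (tailSwap (kk M a s) (ii M a s h) (jj M a s h) s) = kk M a s := by
  set s' := tailSwap (kk M a s) (ii M a s h) (jj M a s h) s with hs'
  have h' := not_nonIntersecting_tailSwap h
  apply le_antisymm
  · apply Nat.sInf_le
    refine ⟨(kk_spec h).1, ?_⟩
    rw [meetAt_congr (kk M a s) (fun l => pos_tailSwap_prefix _ _ _ _ _ _ le_rfl)]
    exact (kk_spec h).2
  · by_contra hlt
    push_neg at hlt
    have hmem := kk_spec h'
    set m := kk M a s' with hm
    have hmle : m ≤ kk M a s := le_of_lt hlt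
    have : MeetAt M a s m := by
      rw [← meetAt_congr m (fun l => pos_tailSwap_prefix _ _ _ _ _ _ hmle)]
      exact hmem.2
    have : kk M a s ≤ m := Nat.sInf_le ⟨hmem.1, this⟩
    omega

lemma iSet_tailSwap :
    iSet M a (tailSwap (kk M a s) (ii M a s h) (jj M a s h) s) = iSet M a s := by
  set s' := tailSwap (kk M a s) (ii M a s h) (jj M a s h) s with hs'
  have hk : kk M a s' = kk M a s := kk_tailSwap h
  unfold iSet
  rw [hk]
  apply Finset.filter_congr
  intro i _
  have hp : ∀ l, pos (a l) (s' l) (kk M a s) = pos (a l) (s l) (kk M a s) :=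
    fun l => pos_tailSwap_prefix _ _ _ _ _ _ le_rfl
  simp only [hp]

lemma ii_tailSwap :
    ii M a (tailSwap (kk M a s) (ii M a s h) (jj M a s h) s)
      (not_nonIntersecting_tailSwap h) = ii M a s h := by
  unfold ii
  congr 1
  exact iSet_tailSwap h

lemma jSet_tailSwap (i : Fin r) :
    jSet M a (tailSwap (kk M a s) (ii M a s h) (jj M a s h) s) i = jSet M a s i := by
  set s' := tailSwap (kk M a s) (ii M a s h) (jj M a s h) s with hs'
  have hk : kk M a s' = kk M a s := kk_tailSwap h
  unfold jSet
  rw [hk]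
  apply Finset.filter_congr
  intro j _
  have hp : ∀ l, pos (a l) (s' l) (kk M a s) = pos (a l) (s l) (kk M a s) :=
    fun l => pos_tailSwap_prefix _ _ _ _ _ _ le_rfl
  simp only [hp]

lemma min'_congr'' {α : Type*} [LinearOrder α] {s t : Finset α} (h : s = t)
    (hs : s.Nonempty) (ht : t.Nonempty) : s.min' hs = t.min' ht := by subst h; rfl

lemma jj_tailSwap :
    jj M a (tailSwap (kk M a s) (ii M a s h) (jj M a s h) s)
      (not_nonIntersecting_tailSwap h) = jj M a s h :=
  min'_congr'' (by rw [ii_tailSwap h, jSet_tailSwap h]) _ _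

end Invariance
section Endpoint

variable {M N r : ℕ} {a : Fin r → ℤ} {s : Fin r → Fin N → Bool}

lemma pos_key (h : ¬ NonIntersecting M a s) (l : Fin r) :
    ((pos (a l) (s l) (kk M a s) : ℤ) : ZMod M)
      = ((pos (a (Equiv.swap (ii M a s h) (jj M a s h) l))
          (s (Equiv.swap (ii M a s h) (jj M a s h) l)) (kk M a s) : ℤ) : ZMod M) := by
  by_cases h1 : l = ii M a s h
  · subst h1
    rw [Equiv.swap_apply_left]
    exact (jj_spec h).2
  · by_cases h2 : l = jj M a s h
    · subst h2
      rw [Equiv.swap_apply_right]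
      exact (jj_spec h).2.symm
    · rw [Equiv.swap_apply_of_ne_of_ne h1 h2]

lemma endsAt_tailSwap (h : ¬ NonIntersecting M a s) (e : Fin r → ℤ) (π : Equiv.Perm (Fin r))
    (hE : ∀ l, EndsAt M (a l) (s l) (e (π l))) :
    ∀ l, EndsAt M (a l) (tailSwap (kk M a s) (ii M a s h) (jj M a s h) s l)
      (e ((π * Equiv.swap (ii M a s h) (jj M a s h)) l)) := by
  intro l
  set σ := Equiv.swap (ii M a s h) (jj M a s h) with hσ
  unfold EndsAt
  have hts : tailSwap (kk M a s) (ii M a s h) (jj M a s h) s l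
      = fun m : Fin N => if (m : ℕ) < kk M a s then s l m else s (σ l) m := rfl
  rw [hts, pos_splice (a l) (a (σ l)) (s l) (s (σ l)) (kk M a s)]
  have hE' := hE (σ l)
  unfold EndsAt at hE'
  have hkey := pos_key h l
  rw [← hσ] at hkey
  push_cast
  rw [hkey]
  simp only [Equiv.Perm.coe_mul, Function.comp_apply]
  rw [← hE']
  ring

end Endpoint
open Finset in
lemma badsum_zero (M N r : ℕ) (x : ℂ) (a e : Fin r → ℤ) :
    ∑ p : Equiv.Perm (Fin r) × (Fin r → Fin N → Bool),
      (if (∀ j, EndsAt M (a j) (p.2 j) (e (p.1 j))) ∧ ¬ NonIntersecting M a p.2 then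
        ((Equiv.Perm.sign p.1 : ℤ) : ℂ) * x ^ (∑ j, dcount (p.2 j)) else 0) = 0 := by
  classical
  set g : Equiv.Perm (Fin r) × (Fin r → Fin N → Bool) →
      Equiv.Perm (Fin r) × (Fin r → Fin N → Bool) := fun p =>
    if hc : ¬ NonIntersecting M a p.2 then
      (p.1 * Equiv.swap (ii M a p.2 hc) (jj M a p.2 hc),
        tailSwap (kk M a p.2) (ii M a p.2 hc) (jj M a p.2 hc) p.2)
    else p with hg
  have hginv : ∀ p, g (g p) = p := by
    rintro ⟨π, s⟩
    by_cases hc : ¬ NonIntersecting M a s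
    · have h1 : g (π, s) = (π * Equiv.swap (ii M a s hc) (jj M a s hc),
          tailSwap (kk M a s) (ii M a s hc) (jj M a s hc) s) := dif_pos hc
      set s' := tailSwap (kk M a s) (ii M a s hc) (jj M a s hc) s with hs'
      have hc' : ¬ NonIntersecting M a s' := not_nonIntersecting_tailSwap hc
      rw [h1]
      have h2 : g (π * Equiv.swap (ii M a s hc) (jj M a s hc), s')
          = ((π * Equiv.swap (ii M a s hc) (jj M a s hc))
              * Equiv.swap (ii M a s' hc') (jj M a s' hc'),
            tailSwap (kk M a s') (ii M a s' hc') (jj M a s' hc') s') := dif_pos hc'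
      rw [h2]
      have hii : ii M a s' hc' = ii M a s hc := ii_tailSwap hc
      have hjj : jj M a s' hc' = jj M a s hc := jj_tailSwap hc
      have hkk : kk M a s' = kk M a s := kk_tailSwap hc
      rw [hii, hjj, hkk, Prod.mk.injEq]
      constructor
      · simp [mul_assoc, Equiv.swap_mul_self]
      · simp only [hs', tailSwap_tailSwap]
    · simp only [hg, dif_neg hc]
  apply Finset.sum_ninvolution g
  · -- f p + f (g p) = 0
    rintro ⟨π, s⟩
    by_cases hc : ¬ NonIntersecting M a s
    · have h1 : g (π, s) = (π * Equiv.swap (ii M a s hc) (jj M a s hc),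
          tailSwap (kk M a s) (ii M a s hc) (jj M a s hc) s) := dif_pos hc
      rw [h1]
      set s' := tailSwap (kk M a s) (ii M a s hc) (jj M a s hc) s with hs'
      have hc' : ¬ NonIntersecting M a s' := not_nonIntersecting_tailSwap hc
      dsimp only
      by_cases hE : ∀ j, EndsAt M (a j) (s j) (e (π j))
      · have hE' : ∀ j, EndsAt M (a j) (s' j)
            (e ((π * Equiv.swap (ii M a s hc) (jj M a s hc)) j)) :=
          endsAt_tailSwap hc e π hE
        rw [if_pos (And.intro hE hc), if_pos (And.intro hE' hc')]
        have hsign : ((Equiv.Perm.sign (π * Equiv.swap (ii M a s hc) (jj M a s hc)) : ℤ) : ℂ)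
            = -((Equiv.Perm.sign π : ℤ) : ℂ) := by
          rw [map_mul, Equiv.Perm.sign_swap (jj_spec hc).1]
          push_cast
          ring
        rw [hsign, hs', sum_dcount_tailSwap]
        ring
      · have hE' : ¬ ∀ j, EndsAt M (a j) (s' j)
            (e ((π * Equiv.swap (ii M a s hc) (jj M a s hc)) j)) := by
          intro hcontra
          apply hE
          have := endsAt_tailSwap hc' e (π * Equiv.swap (ii M a s hc) (jj M a s hc)) hcontra
          have hii : ii M a s' hc' = ii M a s hc := ii_tailSwap hc
          have hjj : jj M a s' hc' = jj M a s hc := jj_tailSwap hc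
          have hkk : kk M a s' = kk M a s := kk_tailSwap hc
          rw [hii, hjj, hkk] at this
          simp only [hs', tailSwap_tailSwap, mul_assoc, Equiv.swap_mul_self, mul_one] at this
          exact this
        rw [if_neg (fun hh => hE hh.1), if_neg (fun hh => hE' hh.1)]
        ring
    · have h1 : g (π, s) = (π, s) := dif_neg hc
      rw [h1]
      dsimp only
      rw [if_neg (fun hh => hc hh.2)]
      ring
  · -- f p ≠ 0 → g p ≠ p
    rintro ⟨π, s⟩ hfp
    have hc : ¬ NonIntersecting M a s := by
      by_contra hcc
      apply hfp
      dsimp only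
      exact if_neg (fun hh => hh.2 hcc)
    have h1 : g (π, s) = (π * Equiv.swap (ii M a s hc) (jj M a s hc),
        tailSwap (kk M a s) (ii M a s hc) (jj M a s hc) s) := dif_pos hc
    rw [h1]
    intro hcontra
    have h2 : π * Equiv.swap (ii M a s hc) (jj M a s hc) = π := congrArg Prod.fst hcontra
    have h3 : Equiv.swap (ii M a s hc) (jj M a s hc) = 1 :=
      mul_left_cancel (h2.trans (mul_one π).symm)
    have h4 := congrArg (fun f => f (ii M a s hc)) h3
    simp only [Equiv.Perm.coe_one, id_eq, Equiv.swap_apply_left] at h4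
    exact (jj_spec hc).1 h4.symm
  · intro p
    exact Finset.mem_univ _
  · exact hginv
open Finset in
lemma det_expand (M N r : ℕ) (x : ℂ) (a e : Fin r → ℤ) :
    Matrix.det (Matrix.of fun i j : Fin r => qx M N (a i) (e j) x)
      = ∑ π : Equiv.Perm (Fin r), ∑ s : Fin r → Fin N → Bool,
          (if (∀ j, EndsAt M (a j) (s j) (e (π j))) then
            ((Equiv.Perm.sign π : ℤ) : ℂ) * x ^ (∑ j, dcount (s j)) else 0) := by
  classical
  rw [← Matrix.det_transpose, Matrix.det_apply']
  apply Finset.sum_congr rfl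
  intro π _
  have h1 : ∀ i : Fin r, Matrix.transpose (Matrix.of fun i j : Fin r => qx M N (a i) (e j) x) (π i) i
      = ∑ s : Fin N → Bool, if EndsAt M (a i) s (e (π i)) then x ^ dcount s else 0 := by
    intro i
    exact qx_eq_sum M N (a i) (e (π i)) x
  rw [Finset.prod_congr rfl (fun i _ => h1 i), Finset.prod_univ_sum, Fintype.piFinset_univ,
    Finset.mul_sum]
  apply Finset.sum_congr rfl
  intro s _
  have h2 : (∏ i, if EndsAt M (a i) (s i) (e (π i)) then x ^ dcount (s i) else 0)
      = (if (∀ j, EndsAt M (a j) (s j) (e (π j))) then x ^ (∑ j, dcount (s j)) else 0) := by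
    split_ifs with hE
    · rw [Finset.prod_congr rfl (fun i _ => if_pos (hE i)), Finset.prod_pow_eq_pow_sum]
    · push_neg at hE
      obtain ⟨j, hj⟩ := hE
      exact Finset.prod_eq_zero (Finset.mem_univ j) (if_neg hj)
  rw [h2]
  split_ifs with hE
  · rfl
  · exact mul_zero _
/-- the generating function with signed weights of all `r`-tuples of
nonintersecting lattice paths of length `N` in the `M`-cylinder, starting at the points
`a 1, …, a r` and ending in some permutation of the points `e 1, …, e r`, equals
`det (q(M,N,a i,e j;x))`. -/
theorem stmt1 (M : ℕ) (hM : 3 ≤ M) (N r : ℕ) (x : ℂ) (a e : Fin r → ℤ)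
    (ha0 : ∀ i, 0 ≤ a i) (haM : ∀ i, a i < M) (hamono : StrictMono a)
    (he0 : ∀ i, 0 ≤ e i) (heM : ∀ i, e i < M) (hemono : StrictMono e)
    (hpar : ∀ i j : Fin r, (2 : ℤ) ∣ ((N : ℤ) - e i + a j)) :
    (∑ π : Equiv.Perm (Fin r), ∑ s : Fin r → Fin N → Bool,
        if NonIntersecting M a s ∧ ∀ j, EndsAt M (a j) (s j) (e (π j)) then
          ((Equiv.Perm.sign π : ℤ) : ℂ) * x ^ (∑ j, dcount (s j))
        else 0)
      = Matrix.det (Matrix.of fun i j : Fin r => qx M N (a i) (e j) x) := by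

  classical
  have hsplit : ∀ (π : Equiv.Perm (Fin r)) (s : Fin r → Fin N → Bool),
      (if NonIntersecting M a s ∧ ∀ j, EndsAt M (a j) (s j) (e (π j)) then
          ((Equiv.Perm.sign π : ℤ) : ℂ) * x ^ (∑ j, dcount (s j)) else 0)
        = (if (∀ j, EndsAt M (a j) (s j) (e (π j))) then
            ((Equiv.Perm.sign π : ℤ) : ℂ) * x ^ (∑ j, dcount (s j)) else 0)
          - (if (∀ j, EndsAt M (a j) (s j) (e (π j))) ∧ ¬ NonIntersecting M a s then
            ((Equiv.Perm.sign π : ℤ) : ℂ) * x ^ (∑ j, dcount (s j)) else 0) := by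
    intro π s
    by_cases h1 : NonIntersecting M a s <;>
      by_cases h2 : ∀ j, EndsAt M (a j) (s j) (e (π j)) <;>
      simp [h1, h2]
  calc (∑ π : Equiv.Perm (Fin r), ∑ s : Fin r → Fin N → Bool,
        if NonIntersecting M a s ∧ ∀ j, EndsAt M (a j) (s j) (e (π j)) then
          ((Equiv.Perm.sign π : ℤ) : ℂ) * x ^ (∑ j, dcount (s j))
        else 0)
      = (∑ π : Equiv.Perm (Fin r), ∑ s : Fin r → Fin N → Bool,
          (if (∀ j, EndsAt M (a j) (s j) (e (π j))) then
            ((Equiv.Perm.sign π : ℤ) : ℂ) * x ^ (∑ j, dcount (s j)) else 0))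
        - (∑ π : Equiv.Perm (Fin r), ∑ s : Fin r → Fin N → Bool,
          (if (∀ j, EndsAt M (a j) (s j) (e (π j))) ∧ ¬ NonIntersecting M a s then
            ((Equiv.Perm.sign π : ℤ) : ℂ) * x ^ (∑ j, dcount (s j)) else 0)) := by
        rw [← Finset.sum_sub_distrib]
        apply Finset.sum_congr rfl
        intro π _
        rw [← Finset.sum_sub_distrib]
        exact Finset.sum_congr rfl fun s _ => hsplit π s
    _ = Matrix.det (Matrix.of fun i j : Fin r => qx M N (a i) (e j) x) := by
        rw [← det_expand M N r x a e]
        have hb : (∑ π : Equiv.Perm (Fin r), ∑ s : Fin r → Fin N → Bool,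
            (if (∀ j, EndsAt M (a j) (s j) (e (π j))) ∧ ¬ NonIntersecting M a s then
              ((Equiv.Perm.sign π : ℤ) : ℂ) * x ^ (∑ j, dcount (s j)) else 0)) = 0 := by
          have hb0 := badsum_zero M N r x a e
          rw [Fintype.sum_prod_type] at hb0
          exact hb0
        rw [hb, sub_zero]
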